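/- Let x, δ ∈ ℝ^n be nonnegative, ε ∈ (0,1), and let x* ∈ ℝ^n satisfy x* ≥ 0 and A_i x* ≥ 1 for every i ∈ [m]. Suppose (i) A_i δ ≤ 1 for every i ∈ [m], and (ii) for every j ∈ [n], if δ_j > 0 then w_j · |a(x)| ≤ (1+4ε)(w·x*) · Σ_{i∈[m]} A_{ij} a_i(x). Then (1−ε) · Σ_{j∈[n]} w_j δ_j ≤ (1+4ε)(w·x*) · (log_{1−ε}|a(x+δ)| − log_{1−ε}|a(x)|). In words: in one increment step of the covering algorithm, the cost added is at most (1+O(ε))·OPT times the increase of the smoothed minimum of the covering constraints. -/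

import Mathlib

lemma rpow_le_one_sub_mul_aux {ε t : ℝ} (hε0 : 0 < ε) (hε1 : ε < 1)
    (ht0 : 0 ≤ t) (ht1 : t ≤ 1) : (1 - ε) ^ t ≤ 1 - ε * t := by
  have hb : (0:ℝ) < 1 - ε := by linarith
  rw [Real.rpow_def_of_pos hb]
  have h := convexOn_exp.2 (Set.mem_univ (0:ℝ)) (Set.mem_univ (Real.log (1 - ε)))
      (by linarith : (0:ℝ) ≤ 1 - t) ht0 (by ring)
  simp only [smul_eq_mul, mul_zero, zero_add, Real.exp_zero, Real.exp_log hb] at h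
  have : Real.log (1 - ε) * t = t * Real.log (1 - ε) := mul_comm _ _
  rw [this]
  nlinarith [h]

/-- In one increment step of the covering algorithm, the cost added is
at most `(1+4ε)·(w·x*)/(1−ε)` times the increase of the smoothed minimum
`log_{1−ε}|a(·)|`, i.e.
`(1−ε)·(w·δ) ≤ (1+4ε)(w·x*)·(log_{1−ε}|a(x+δ)| − log_{1−ε}|a(x)|)`. -/
theorem covering_increment_invariant
    (m n : ℕ) (hm : 0 < m) (hn : 0 < n)
    (A : Fin m → Fin n → ℝ) (w : Fin n → ℝ)
    (hA : ∀ i j, 0 ≤ A i j) (hw : ∀ j, 0 ≤ w j)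
    (x δ : Fin n → ℝ) (hx : ∀ j, 0 ≤ x j) (hδ : ∀ j, 0 ≤ δ j)
    (ε : ℝ) (hε : ε ∈ Set.Ioo (0 : ℝ) 1)
    (xs : Fin n → ℝ) (hxs : ∀ j, 0 ≤ xs j)
    (hfeas : ∀ i, 1 ≤ ∑ j, A i j * xs j)
    (hAδ : ∀ i, ∑ j, A i j * δ j ≤ 1)
    (hcols : ∀ j, 0 < δ j →
      w j * (∑ i, (1 - ε) ^ (∑ j', A i j' * x j'))
        ≤ (1 + 4 * ε) * (∑ j', w j' * xs j') *
            (∑ i, A i j * (1 - ε) ^ (∑ j', A i j' * x j'))) :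
    (1 - ε) * (∑ j, w j * δ j)
      ≤ (1 + 4 * ε) * (∑ j', w j' * xs j') *
          (Real.log (∑ i, (1 - ε) ^ (∑ j, A i j * (x j + δ j))) / Real.log (1 - ε)
            - Real.log (∑ i, (1 - ε) ^ (∑ j, A i j * x j)) / Real.log (1 - ε)) := by
  obtain ⟨hε0, hε1⟩ := hε
  have hb0 : (0:ℝ) < 1 - ε := by linarith
  have hb1 : (1:ℝ) - ε < 1 := by linarith
  have hL : Real.log (1 - ε) < 0 := Real.log_neg hb0 hb1
  set a : Fin m → ℝ := fun i => (1 - ε) ^ (∑ j', A i j' * x j') with ha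
  have hapos : ∀ i, 0 < a i := fun i => Real.rpow_pos_of_pos hb0 _
  set P := ∑ i, a i with hP
  have hPpos : 0 < P :=
    Finset.sum_pos (fun i _ => hapos i) ⟨⟨0, hm⟩, Finset.mem_univ _⟩
  have hAδ0 : ∀ i, 0 ≤ ∑ j, A i j * δ j :=
    fun i => Finset.sum_nonneg fun j _ => mul_nonneg (hA i j) (hδ j)
  set T := ∑ i, a i * (∑ j, A i j * δ j) with hT
  have hT0 : 0 ≤ T :=
    Finset.sum_nonneg fun i _ => mul_nonneg (hapos i).le (hAδ0 i)
  have hTP : T ≤ P := by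
    apply Finset.sum_le_sum
    intro i _
    nlinarith [hapos i, hAδ i, hAδ0 i]
  set C := (1 + 4 * ε) * (∑ j', w j' * xs j') with hC
  have hC0 : 0 ≤ C :=
    mul_nonneg (by linarith) (Finset.sum_nonneg fun j _ => mul_nonneg (hw j) (hxs j))
  -- Step A: (∑ j, w j * δ j) * P ≤ C * T
  have stepA : (∑ j, w j * δ j) * P ≤ C * T := by
    have hswap : T = ∑ j, δ j * (∑ i, A i j * a i) := by
      calc T = ∑ i, ∑ j, δ j * (A i j * a i) := by
              apply Finset.sum_congr rfl
              intro i _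
              rw [Finset.mul_sum]
              apply Finset.sum_congr rfl
              intro j _; ring
        _ = ∑ j, ∑ i, δ j * (A i j * a i) := Finset.sum_comm
        _ = ∑ j, δ j * (∑ i, A i j * a i) := by
              apply Finset.sum_congr rfl
              intro j _
              rw [Finset.mul_sum]
    rw [hswap, Finset.sum_mul, Finset.mul_sum]
    apply Finset.sum_le_sum
    intro j _
    rcases eq_or_lt_of_le (hδ j) with h0 | hpos
    · simp [← h0]
    · have := hcols j hpos
      calc w j * δ j * P = δ j * (w j * P) := by ring
        _ ≤ δ j * (C * (∑ i, A i j * a i)) := by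
            apply mul_le_mul_of_nonneg_left this (hδ j)
        _ = C * (δ j * (∑ i, A i j * a i)) := by ring
  -- Step B: Q ≤ P - ε * T
  set Q := ∑ i, (1 - ε) ^ (∑ j, A i j * (x j + δ j)) with hQ
  have hQpos : 0 < Q :=
    Finset.sum_pos (fun i _ => Real.rpow_pos_of_pos hb0 _) ⟨⟨0, hm⟩, Finset.mem_univ _⟩
  have stepB : Q ≤ P - ε * T := by
    have : Q ≤ ∑ i, (a i - ε * (a i * (∑ j, A i j * δ j))) := by
      apply Finset.sum_le_sum
      intro i _
      have hexp : (∑ j, A i j * (x j + δ j)) = (∑ j', A i j' * x j') + (∑ j, A i j * δ j) := by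
        rw [← Finset.sum_add_distrib]
        apply Finset.sum_congr rfl
        intro j _; ring
      rw [hexp, Real.rpow_add hb0]
      have hle : (1 - ε) ^ (∑ j, A i j * δ j) ≤ 1 - ε * (∑ j, A i j * δ j) :=
        rpow_le_one_sub_mul_aux hε0 hε1 (hAδ0 i) (hAδ i)
      have := mul_le_mul_of_nonneg_left hle (hapos i).le
      calc a i * (1 - ε) ^ (∑ j, A i j * δ j)
          ≤ a i * (1 - ε * (∑ j, A i j * δ j)) := this
        _ = a i - ε * (a i * (∑ j, A i j * δ j)) := by ring
    calc Q ≤ ∑ i, (a i - ε * (a i * (∑ j, A i j * δ j))) := this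
      _ = P - ε * T := by rw [hP, hT, Finset.sum_sub_distrib, Finset.mul_sum]
  -- Step C: (1 - ε) * (T / P) ≤ log Q / log (1-ε) - log P / log (1-ε)
  have stepC : (1 - ε) * (T / P) ≤ Real.log Q / Real.log (1 - ε) - Real.log P / Real.log (1 - ε) := by
    -- log Q - log P ≤ -ε * T / P
    have hlog1 : Real.log Q - Real.log P ≤ -(ε * T / P) := by
      have h2 : Q / P ≤ (P - ε * T) / P := by gcongr
      have h3 : (P - ε * T) / P = 1 - ε * T / P := by field_simp
      have h1 : Real.log (Q / P) ≤ Q / P - 1 :=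
        Real.log_le_sub_one_of_pos (div_pos hQpos hPpos)
      rw [Real.log_div (ne_of_gt hQpos) (ne_of_gt hPpos)] at h1
      rw [h3] at h2
      linarith
    -- -log(1-ε) ≤ ε / (1-ε)
    have hlog2 : -Real.log (1 - ε) ≤ ε / (1 - ε) := by
      have h := Real.log_le_sub_one_of_pos (show (0:ℝ) < (1 - ε)⁻¹ by positivity)
      rw [Real.log_inv] at h
      have : (1 - ε)⁻¹ - 1 = ε / (1 - ε) := by field_simp; ring
      linarith [this ▸ h]
    have hlog2' : -Real.log (1 - ε) * (1 - ε) ≤ ε := (le_div_iff₀ hb0).mp hlog2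
    rw [div_sub_div_same, le_div_iff_of_neg hL]
    have hTP0 : 0 ≤ T / P := div_nonneg hT0 hPpos.le
    have h4 : T / P * (-Real.log (1 - ε) * (1 - ε)) ≤ T / P * ε :=
      mul_le_mul_of_nonneg_left hlog2' hTP0
    have hlog1' : Real.log Q - Real.log P ≤ -(ε * (T / P)) := by
      rw [← mul_div_assoc]; exact hlog1
    generalize T / P = s at h4 hlog1' ⊢
    nlinarith [h4, hlog1']
  -- Combine
  have hA' : (∑ j, w j * δ j) ≤ C * (T / P) := by
    rw [← mul_div_assoc]
    exact (le_div_iff₀ hPpos).mpr stepA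
  calc (1 - ε) * (∑ j, w j * δ j)
      ≤ (1 - ε) * (C * (T / P)) := by
        apply mul_le_mul_of_nonneg_left hA' hb0.le
    _ = C * ((1 - ε) * (T / P)) := by ring
    _ ≤ C * (Real.log Q / Real.log (1 - ε) - Real.log P / Real.log (1 - ε)) :=
        mul_le_mul_of_nonneg_left stepC hC0
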